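/- Let N ≥ 1, j = N/2, and define the isometry U_j⁺ : ℂ^(N+2) → ℂ^(N+1) ⊗ ℂ² by U_j⁺ |m + ½⟩' := √((j+m+1)/(2j+1)) |m⟩ ⊗ e₁ + √((j−m)/(2j+1)) |m+1⟩ ⊗ e₂ for m = −j−1, …, j (terms with vanishing coefficient omitted), where {|m'⟩' : m' = −j−½, …, j+½} is the standard orthonormal basis of ℂ^(N+2). Then for every (φ, θ), U_j⁺ |φ,θ⟩_{N+1} = |φ,θ⟩_N ⊗ |φ,θ⟩₁, where |φ,θ⟩₁ = e^{iφ/2} cos(θ/2) e₁ + e^{−iφ/2} sin(θ/2) e₂ is the Bloch vector for N = 1 written in the basis e₁ = |½⟩, e₂ = |−½⟩. -/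
import Mathlib


noncomputable section
open Matrix

/-- The diagonal matrix `H` with `H|m⟩ = m|m⟩`, `m = i - N/2` for index `i : Fin (N+1)`. -/
def Hmat (N : ℕ) : Matrix (Fin (N + 1)) (Fin (N + 1)) ℂ :=
  Matrix.diagonal fun i => (i : ℂ) - (N : ℂ) / 2

/-- The raising operator `E` with `E|m⟩ = √((j-m)(j+m+1)) |m+1⟩`, `j = N/2`. -/
def Emat (N : ℕ) : Matrix (Fin (N + 1)) (Fin (N + 1)) ℂ := fun p q =>
  if (p : ℕ) = (q : ℕ) + 1 then (Real.sqrt ((N - (q : ℕ)) * ((q : ℕ) + 1)) : ℂ) else 0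

def Fmat (N : ℕ) : Matrix (Fin (N + 1)) (Fin (N + 1)) ℂ := (Emat N)ᴴ

/-- The Bloch coherent state vector `|φ,θ⟩_N`, with component at index `i` (i.e. `m = i − N/2`)
equal to `C(N, i)^(1/2) e^(−i m φ) (sin(θ/2))^(N/2+m) (cos(θ/2))^(N/2−m)`. -/
def blochVec (N : ℕ) (φ θ : ℝ) : Fin (N + 1) → ℂ := fun i =>
  (Real.sqrt (N.choose i) : ℂ) * Complex.exp (-Complex.I * ((i : ℂ) - (N : ℂ) / 2) * (φ : ℂ)) *
    (Real.sin (θ / 2) : ℂ) ^ (i : ℕ) * (Real.cos (θ / 2) : ℂ) ^ (N - (i : ℕ))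

/-- The Bloch coherent state `ψ^N_(φ,θ)(a) = ⟨φ,θ| a |φ,θ⟩_N`. -/
def psiState (N : ℕ) (a : Matrix (Fin (N + 1)) (Fin (N + 1)) ℂ) (φ θ : ℝ) : ℂ :=
  star (blochVec N φ θ) ⬝ᵥ a.mulVec (blochVec N φ θ)

/-- The isometry `U_j⁺ : ℂ^(N+2) → ℂ^(N+1) ⊗ ℂ²` (`j = N/2`), defined on the basis by
`U_j⁺ |m+½⟩' = √((j+m+1)/(2j+1)) |m⟩⊗e₁ + √((j−m)/(2j+1)) |m+1⟩⊗e₂`, written as a matrix;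
the column index `k = m + j + 1 ∈ {0, …, N+1}`, the `inl` row index is the `⊗e₁` component
and the `inr` row index the `⊗e₂` component. -/
def Uplus (N : ℕ) : Matrix (Fin (N + 1) ⊕ Fin (N + 1)) (Fin (N + 2)) ℂ := fun r k =>
  Sum.elim
    (fun i : Fin (N + 1) =>
      if (i : ℕ) + 1 = (k : ℕ) then (Real.sqrt ((k : ℝ) / (N + 1)) : ℂ) else 0)
    (fun i : Fin (N + 1) =>
      if (i : ℕ) = (k : ℕ) then (Real.sqrt (((N : ℝ) + 1 - (k : ℕ)) / (N + 1)) : ℂ) else 0) r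

lemma sq1 (N : ℕ) (i : Fin (N+1)) :
    Real.sqrt (((i:ℕ) + 1 : ℝ) / (N + 1)) * Real.sqrt ((N+1).choose ((i:ℕ)+1)) =
      Real.sqrt (N.choose i) := by
  rw [← Real.sqrt_mul (by positivity)]
  congr 1
  have hN : ((N:ℝ) + 1) ≠ 0 := by positivity
  have h : ((N:ℝ)+1) * N.choose i = ((N+1).choose ((i:ℕ)+1)) * ((i:ℕ)+1) := by
    exact_mod_cast congrArg (Nat.cast : ℕ → ℝ) (Nat.add_one_mul_choose_eq N i)
  rw [div_mul_eq_mul_div, div_eq_iff hN]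
  linarith

lemma sq2 (N : ℕ) (i : Fin (N+1)) :
    Real.sqrt (((N:ℝ) + 1 - (i:ℕ)) / (N + 1)) * Real.sqrt ((N+1).choose (i:ℕ)) =
      Real.sqrt (N.choose i) := by
  have hi : (i:ℕ) ≤ N := Nat.lt_succ_iff.mp i.isLt
  have hi' : ((i:ℕ):ℝ) ≤ N := by exact_mod_cast hi
  rw [← Real.sqrt_mul (div_nonneg (by linarith) (by positivity))]
  congr 1
  have hN : ((N:ℝ) + 1) ≠ 0 := by positivity
  have hnat : (N + 1 - (i:ℕ)) * ((N+1).choose i) = (N.choose i) * (N+1) := by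
    rw [mul_comm]; exact (Nat.choose_mul_succ_eq N i).symm
  have h : ((N:ℝ) + 1 - (i:ℕ)) * ((N+1).choose i) = (N.choose i) * ((N:ℝ)+1) := by
    have := congrArg (Nat.cast : ℕ → ℝ) hnat
    push_cast [Nat.cast_sub (by omega : (i:ℕ) ≤ N+1)] at this
    linarith
  rw [div_mul_eq_mul_div, div_eq_iff hN]
  linarith


/-- `U_j⁺ |φ,θ⟩_{N+1} = |φ,θ⟩_N ⊗ |φ,θ⟩₁`, where `|φ,θ⟩₁` is the `N = 1`
Bloch coherent state vector, whose `e₁ = |½⟩` coefficient is `blochVec 1 φ θ 1` and whose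
`e₂ = |−½⟩` coefficient is `blochVec 1 φ θ 0`. -/
theorem Uplus_bloch (N : ℕ) (hN : 1 ≤ N) (φ θ : ℝ) :
    (Uplus N).mulVec (blochVec (N + 1) φ θ) =
      Sum.elim (fun i => blochVec N φ θ i * blochVec 1 φ θ 1)
        (fun i => blochVec N φ θ i * blochVec 1 φ θ 0) := by
  funext r
  cases r with
  | inl i =>
    have hi : (i:ℕ) ≤ N := Nat.lt_succ_iff.mp i.isLt
    have hstep : (Uplus N).mulVec (blochVec (N + 1) φ θ) (Sum.inl i) =
        (Real.sqrt (((i:ℕ)+1 : ℝ) / (N + 1)) : ℂ) *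
          blochVec (N+1) φ θ ⟨(i:ℕ)+1, by omega⟩ := by
      unfold Uplus mulVec dotProduct
      rw [Finset.sum_eq_single (⟨(i:ℕ)+1, by omega⟩ : Fin (N+2))]
      · simp
      · intro b _ hb
        have : (i:ℕ) + 1 ≠ (b:ℕ) := fun h => hb (Fin.ext (by simp only [Fin.val_mk]; omega))
        simp [this]
      · simp
    rw [hstep]
    simp only [blochVec, Sum.elim_inl]
    have hsq : (Real.sqrt (((i:ℕ)+1 : ℝ) / (N + 1)) : ℂ) *
        (Real.sqrt ((N+1).choose ((i:ℕ)+1)) : ℂ) = (Real.sqrt (N.choose i) : ℂ) := by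
      rw [← Complex.ofReal_mul, sq1]
    have hexp : Complex.exp (-Complex.I * ((((i:ℕ)+1 : ℕ) : ℂ) - ((N:ℂ)+1) / 2) * (φ:ℂ)) =
        Complex.exp (-Complex.I * ((i : ℂ) - (N : ℂ) / 2) * (φ : ℂ)) *
        Complex.exp (-Complex.I * ((1 : ℂ) - (1 : ℂ) / 2) * (φ : ℂ)) := by
      rw [← Complex.exp_add]
      congr 1
      push_cast
      ring
    simp only [Fin.val_mk, Nat.cast_add, Nat.cast_one]
    simp only [show ((1:Fin 2):ℕ) = 1 from rfl, Nat.choose_self, Nat.cast_one,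
      Real.sqrt_one, pow_one, Nat.sub_self, pow_zero, Nat.succ_sub_succ, Complex.ofReal_one]
    push_cast at hexp
    rw [hexp]
    linear_combination (Complex.exp (-Complex.I * (((i:ℕ):ℂ) - (N:ℂ)/2) * (φ:ℂ)) *
      Complex.exp (-Complex.I * ((1:ℂ) - (1:ℂ)/2) * (φ:ℂ)) *
      (Real.sin (θ/2):ℂ)^((i:ℕ)+1) * (Real.cos (θ/2):ℂ)^(N-(i:ℕ))) * hsq
  | inr i =>
    have hi : (i:ℕ) ≤ N := Nat.lt_succ_iff.mp i.isLt
    have hstep : (Uplus N).mulVec (blochVec (N + 1) φ θ) (Sum.inr i) =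
        (Real.sqrt (((N:ℝ)+1-(i:ℕ)) / (N + 1)) : ℂ) *
          blochVec (N+1) φ θ ⟨(i:ℕ), by omega⟩ := by
      unfold Uplus mulVec dotProduct
      rw [Finset.sum_eq_single (⟨(i:ℕ), by omega⟩ : Fin (N+2))]
      · simp
      · intro b _ hb
        have : (i:ℕ) ≠ (b:ℕ) := fun h => hb (Fin.ext (by simp only [Fin.val_mk]; omega))
        simp [this]
      · simp
    rw [hstep]
    simp only [blochVec, Sum.elim_inr]
    have hsq : (Real.sqrt (((N:ℝ)+1-(i:ℕ)) / (N + 1)) : ℂ) *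
        (Real.sqrt ((N+1).choose (i:ℕ)) : ℂ) = (Real.sqrt (N.choose i) : ℂ) := by
      rw [← Complex.ofReal_mul, sq2]
    have hexp : Complex.exp (-Complex.I * (((i:ℕ) : ℂ) - ((N:ℂ)+1) / 2) * (φ:ℂ)) =
        Complex.exp (-Complex.I * ((i : ℂ) - (N : ℂ) / 2) * (φ : ℂ)) *
        Complex.exp (-Complex.I * ((0 : ℂ) - (1 : ℂ) / 2) * (φ : ℂ)) := by
      rw [← Complex.exp_add]
      congr 1
      ring
    have hpow : (N + 1 - (i:ℕ)) = (N - (i:ℕ)) + 1 := by omega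
    simp only [Fin.val_mk, show ((0:Fin 2):ℕ) = 0 from rfl, Nat.choose_zero_right,
      Nat.cast_one, Real.sqrt_one, pow_zero, Nat.sub_zero, pow_one, Complex.ofReal_one,
      Nat.cast_zero, hpow, pow_succ, Nat.cast_add]
    push_cast at hexp
    rw [hexp]
    linear_combination (Complex.exp (-Complex.I * (((i:ℕ):ℂ) - (N:ℂ)/2) * (φ:ℂ)) *
      Complex.exp (-Complex.I * ((0:ℂ) - (1:ℂ)/2) * (φ:ℂ)) *
      (Real.sin (θ/2):ℂ)^((i:ℕ)) * (Real.cos (θ/2):ℂ)^((N-(i:ℕ))+1)) * hsq
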